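/- arXiv:2209.12301 — 2 statements merged into one kernel-verified Lean document; each statement's English description precedes it below -/
import Mathlib

section
/- Let D be a Shift-ECS, let v1 and v2 be shift nodes with labels k1, k2 ∈ ℤ. Extend D with fresh nodes v', v'', v''' where ℓ(v') = v'', λ(v') = k1, ℓ(v'') = ℓ(v1), r(v'') = v''', λ(v'') = ⊙, ℓ(v''') = ℓ(v2), λ(v''') = k2 − k1. Then in the extended structure D', the semantics satisfies ⟦D'⟧(v') = ⟦D⟧(v1) · ⟦D⟧(v2). -/
/-- Shift a string over `Ω × ℤ` by `k`: add `k` to every position. -/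
def sh {Ω : Type} (w : List (Ω × ℤ)) (k : ℤ) : List (Ω × ℤ) :=
  w.map (fun p => (p.1, p.2 + k))

def shL {Ω : Type} (L : Set (List (Ω × ℤ))) (k : ℤ) : Set (List (Ω × ℤ)) :=
  (fun w => sh w k) '' L

def catL {Ω : Type} (L1 L2 : Set (List (Ω × ℤ))) : Set (List (Ω × ℤ)) :=
  Set.image2 (· ++ ·) L1 L2

/-- Labels of a Shift-ECS node: an output letter, a shift value, union, or product. -/
inductive Lab (Ω : Type) where
  | bot (o : Ω)
  | shift (k : ℤ)
  | union
  | prod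

/-- A Shift-ECS: nodes with partial left/right children and a labeling. -/
structure ECS (Ω : Type) where
  V : Type
  l : V → Option V
  r : V → Option V
  lab : V → Lab Ω

/-- The semantics `⟦D⟧(v)` of a Shift-ECS, as an inductively defined
membership relation: singletons at bottom nodes, union at `∪`-nodes,
concatenation at `⊙`-nodes, and shifting at shift nodes. -/
inductive ECS.Sem {Ω : Type} (D : ECS Ω) : D.V → List (Ω × ℤ) → Prop
  | bot {v o} : D.lab v = .bot o → D.Sem v [(o, 1)]
  | unionL {v u w} : D.lab v = .union → D.l v = some u → D.Sem u w → D.Sem v w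
  | unionR {v u w} : D.lab v = .union → D.r v = some u → D.Sem u w → D.Sem v w
  | prod {v u1 u2 w1 w2} : D.lab v = .prod → D.l v = some u1 → D.r v = some u2 →
      D.Sem u1 w1 → D.Sem u2 w2 → D.Sem v (w1 ++ w2)
  | shift {v u k w} : D.lab v = .shift k → D.l v = some u → D.Sem u w → D.Sem v (sh w k)

/-- `⟦D⟧(v)` as a set. -/
def ECS.semSet {Ω : Type} (D : ECS Ω) (v : D.V) : Set (List (Ω × ℤ)) :=
  {w | D.Sem v w}

lemma sh_append {X : Type} (a b : List (X × ℤ)) (k : ℤ) :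
    sh (a ++ b) k = sh a k ++ sh b k := List.map_append

lemma sh_sh {X : Type} (w : List (X × ℤ)) (a b : ℤ) :
    sh (sh w a) b = sh w (a + b) := by
  simp [sh, add_assoc]

/-- Correctness of the product gadget: if `v1`, `v2` are shift nodes with
labels `k1`, `k2`, and fresh nodes `v'`, `v''`, `v'''` are added with
`λ(v') = k1`, `ℓ(v') = v''`, `λ(v'') = ⊙`, `ℓ(v'') = ℓ(v1)`, `r(v'') = v'''`,
`λ(v''') = k2 - k1`, `ℓ(v''') = ℓ(v2)`, then in the extended structure
`⟦D'⟧(v') = ⟦D⟧(v1) · ⟦D⟧(v2)` (the semantics of old nodes being preserved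
under extension with fresh nodes). -/
theorem prod_gadget_correct {Ω : Type} (D : ECS Ω) (v1 v2 v' v'' v''' : D.V)
    (k1 k2 : ℤ)
    (h1 : D.lab v1 = .shift k1) (h2 : D.lab v2 = .shift k2)
    (hp : D.lab v' = .shift k1) (hpl : D.l v' = some v'')
    (hpp : D.lab v'' = .prod) (hppl : D.l v'' = D.l v1) (hppr : D.r v'' = some v''')
    (hppp : D.lab v''' = .shift (k2 - k1)) (hpppl : D.l v''' = D.l v2) :
    D.semSet v' = catL (D.semSet v1) (D.semSet v2) := by
  ext w
  simp only [ECS.semSet, Set.mem_setOf_eq, catL, Set.mem_image2]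
  constructor
  · intro h
    cases h with
    | bot hb => rw [hp] at hb; cases hb
    | unionL hb _ _ => rw [hp] at hb; cases hb
    | unionR hb _ _ => rw [hp] at hb; cases hb
    | prod hb _ _ _ _ => rw [hp] at hb; cases hb
    | shift hk hl hs =>
      rw [hp] at hk; injection hk with hk; subst hk
      rw [hpl] at hl; injection hl with hl; subst hl
      cases hs with
      | bot hb => rw [hpp] at hb; cases hb
      | unionL hb _ _ => rw [hpp] at hb; cases hb
      | unionR hb _ _ => rw [hpp] at hb; cases hb
      | shift hb _ _ => rw [hpp] at hb; cases hb
      | prod hb hl1 hr1 s1 s2 =>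
        rw [hppr] at hr1; injection hr1 with hr1; subst hr1
        rw [hppl] at hl1
        cases s2 with
        | bot hb => rw [hppp] at hb; cases hb
        | unionL hb _ _ => rw [hppp] at hb; cases hb
        | unionR hb _ _ => rw [hppp] at hb; cases hb
        | prod hb _ _ _ _ => rw [hppp] at hb; cases hb
        | shift hk3 hl3 s3 =>
          rw [hppp] at hk3; injection hk3 with hk3; subst hk3
          rw [hpppl] at hl3
          refine ⟨_, ECS.Sem.shift h1 hl1 s1, _, ECS.Sem.shift h2 hl3 s3, ?_⟩
          rw [sh_append, sh_sh, sub_add_cancel]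
  · rintro ⟨a, ha, b, hb, rfl⟩
    cases ha with
    | bot hb' => rw [h1] at hb'; cases hb'
    | unionL hb' _ _ => rw [h1] at hb'; cases hb'
    | unionR hb' _ _ => rw [h1] at hb'; cases hb'
    | prod hb' _ _ _ _ => rw [h1] at hb'; cases hb'
    | shift hk hl s1 =>
      rw [h1] at hk; injection hk with hk; subst hk
      cases hb with
      | bot hb' => rw [h2] at hb'; cases hb'
      | unionL hb' _ _ => rw [h2] at hb'; cases hb'
      | unionR hb' _ _ => rw [h2] at hb'; cases hb'
      | prod hb' _ _ _ _ => rw [h2] at hb'; cases hb'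
      | shift hk2 hl2 s2 =>
        rw [h2] at hk2; injection hk2 with hk2; subst hk2
        have h3 : D.Sem v''' (sh _ (k2 - k1)) :=
          ECS.Sem.shift hppp (hpppl.trans hl2) s2
        have h4 := ECS.Sem.prod hpp (hppl.trans hl) hppr s1 h3
        have h5 := ECS.Sem.shift hp hpl h4
        rwa [sh_append, sh_sh, sub_add_cancel] at h5
end

section
/- Every sequential extended variable-set automaton A over variables X and alphabet Σ can be translated into an annotated automaton A' over alphabet Σ ∪ {#} and output alphabet 2^{markers of X} such that for every document d, the mappings in ⟦A⟧(d) are in bijection with the annotations in ⟦A'⟧(d#); moreover, if A is unambiguous then A' is unambiguous. -/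
/-- An annotated automaton (AnnA) over input alphabet `A` and output alphabet
`Ω`: plain letter transitions `Δp`, annotated letter transitions `Δa`, an
initial state and final states. -/
structure AnnA (Q A Ω : Type) where
  Δp : Q → A → Q → Prop
  Δa : Q → A → Ω → Q → Prop
  q0 : Q
  F : Set Q

/-- A run of an AnnA from state `p` over a document, recorded as a trace:
for each letter, the (optional) annotation used and the state reached. -/
inductive AnnA.Run {Q A Ω : Type} (M : AnnA Q A Ω) :
    Q → List A → List (Option Ω × Q) → Prop
  | nil {p} : M.Run p [] []
  | plain {p a q d tr} : M.Δp p a q → M.Run q d tr → M.Run p (a :: d) ((none, q) :: tr)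
  | ann {p a o q d tr} : M.Δa p a o q → M.Run q d tr →
      M.Run p (a :: d) ((some o, q) :: tr)

/-- The annotation of a trace starting after position `i`: the sequence of
pairs `(o, j)` for the positions `j` read with annotation `o` (1-indexed). -/
def annOf {Q Ω : Type} : ℕ → List (Option Ω × Q) → List (Ω × ℕ)
  | _, [] => []
  | i, (none, _) :: tr => annOf (i + 1) tr
  | i, (some o, _) :: tr => (o, i + 1) :: annOf (i + 1) tr

/-- The final state of a run starting at `p` with trace `tr`. -/
def finalState {Q Ω : Type} (p : Q) (tr : List (Option Ω × Q)) : Q :=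
  (tr.map Prod.snd).getLastD p

/-- The semantics `⟦M⟧(d)`: the set of annotations of accepting runs over `d`. -/
def AnnA.sem {Q A Ω : Type} (M : AnnA Q A Ω) (d : List A) : Set (List (Ω × ℕ)) :=
  {ν | ∃ tr, M.Run M.q0 d tr ∧ finalState M.q0 tr ∈ M.F ∧ annOf 0 tr = ν}

/-- A variable marker: `(true, x)` is `⊢x` (open) and `(false, x)` is `⊣x` (close). -/
abbrev Marker (X : Type) := Bool × X

/-- An extended variable-set automaton: letter transitions and extended
variable transitions labeled by nonempty sets of markers. -/
structure EVA (Q A X : Type) where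
  Δl : Q → A → Q → Prop
  Δv : Q → Set (Marker X) → Q → Prop
  q0 : Q
  F : Set Q

/-- One (possibly trivial) variable step: either no variable transition is
taken (`V = ∅`) or a variable transition on a nonempty set `V` is taken. -/
def EVA.VStep {Q A X : Type} (M : EVA Q A X) (p : Q) (V : Set (Marker X))
    (p' : Q) : Prop :=
  (V = ∅ ∧ p' = p) ∨ (V ≠ ∅ ∧ M.Δv p V p')

/-- A run of an extended VA over a document `d = a1...an`, recorded as the
trace of the marker sets `S1, ..., S_{n+1}` together with intermediate states;
it alternates optional variable steps with letter steps and ends with an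
optional variable step, the last component being the final state. -/
inductive EVA.Run {Q A X : Type} (M : EVA Q A X) :
    Q → List A → List (Set (Marker X) × Q) → Q → Prop
  | last {p V p'} : M.VStep p V p' → M.Run p [] [(V, p')] p'
  | cons {p V p' a q d tr pf} : M.VStep p V p' → M.Δl p' a q → M.Run q d tr pf →
      M.Run p (a :: d) ((V, p') :: tr) pf

/-- Validity of the sequence `Vs = S1...S_{n+1}` of marker sets of a run:
every marker occurs at most once, `⊢x` occurs iff `⊣x` does, and `⊢x` occurs
no later than `⊣x`. -/
def ValidVs {X : Type} (Vs : List (Set (Marker X))) : Prop :=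
  (∀ m : Marker X, ∀ i j, i < Vs.length → j < Vs.length →
    m ∈ Vs.getD i ∅ → m ∈ Vs.getD j ∅ → i = j) ∧
  (∀ x : X, (∃ i, i < Vs.length ∧ (true, x) ∈ Vs.getD i ∅) ↔
            (∃ j, j < Vs.length ∧ (false, x) ∈ Vs.getD j ∅)) ∧
  (∀ x : X, ∀ i j, i < Vs.length → j < Vs.length →
    (true, x) ∈ Vs.getD i ∅ → (false, x) ∈ Vs.getD j ∅ → i ≤ j)

/-- `μ` is the mapping defined by the marker-set sequence `Vs` (1-indexed):
`μ(x) = [i, j⟩` iff `⊢x ∈ S_i` and `⊣x ∈ S_j`. -/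
def MapOf {X : Type} (Vs : List (Set (Marker X))) (μ : X → Option (ℕ × ℕ)) : Prop :=
  ∀ x i j, μ x = some (i, j) ↔
    (1 ≤ i ∧ i ≤ Vs.length ∧ 1 ≤ j ∧ j ≤ Vs.length ∧
      (true, x) ∈ Vs.getD (i - 1) ∅ ∧ (false, x) ∈ Vs.getD (j - 1) ∅)

/-- The spanner semantics `⟦M⟧(d)`: mappings of accepting valid runs. -/
def EVA.sem {Q A X : Type} (M : EVA Q A X) (d : List A) :
    Set (X → Option (ℕ × ℕ)) :=
  {μ | ∃ tr pf, M.Run M.q0 d tr pf ∧ pf ∈ M.F ∧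
        ValidVs (tr.map Prod.fst) ∧ MapOf (tr.map Prod.fst) μ}

/-- `M` is sequential: every accepting run is valid. -/
def EVA.Sequential {Q A X : Type} (M : EVA Q A X) : Prop :=
  ∀ d tr pf, M.Run M.q0 d tr pf → pf ∈ M.F → ValidVs (tr.map Prod.fst)

/-- `M` is unambiguous: every mapping in `⟦M⟧(d)` arises from exactly one
accepting run. -/
def EVA.Unambiguous {Q A X : Type} (M : EVA Q A X) : Prop :=
  ∀ (d : List A) (μ : X → Option (ℕ × ℕ)) tr pf tr' pf',
    M.Run M.q0 d tr pf → pf ∈ M.F → MapOf (tr.map Prod.fst) μ →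
    M.Run M.q0 d tr' pf' → pf' ∈ M.F → MapOf (tr'.map Prod.fst) μ →
    tr = tr'

/-- An AnnA is unambiguous if each annotation in `⟦M⟧(d)` arises from exactly
one accepting run. -/
def AnnA.Unambiguous {Q A Ω : Type} (M : AnnA Q A Ω) : Prop :=
  ∀ (d : List A) (ν : List (Ω × ℕ)) (tr tr' : List (Option Ω × Q)),
    M.Run M.q0 d tr → finalState M.q0 tr ∈ M.F → annOf 0 tr = ν →
    M.Run M.q0 d tr' → finalState M.q0 tr' ∈ M.F → annOf 0 tr' = ν →
    tr = tr'

open Classical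

section Aux
variable {Q A X : Type}

/-- States of the translated automaton. -/
inductive St (Q A : Type) : Type where
  | init : Q → St Q A
  | mid : Q → A → St Q A
  | fin : Q → St Q A

/-- Plain transitions of the translated automaton. -/
inductive TrP (M : EVA Q A X) : St Q A → Option A → St Q A → Prop
  | initS {p a} : TrP M (.init p) (some a) (.mid p a)
  | midS {p b a q} : M.Δl p b q → TrP M (.mid p b) (some a) (.mid q a)
  | initN {p} : TrP M (.init p) none (.fin p)
  | midN {p b f} : M.Δl p b f → TrP M (.mid p b) none (.fin f)

/-- Annotated transitions of the translated automaton. -/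
inductive TrA (M : EVA Q A X) : St Q A → Option A → Set (Marker X) → St Q A → Prop
  | initS {p a V p'} : V ≠ ∅ → M.Δv p V p' → TrA M (.init p) (some a) V (.mid p' a)
  | midS {p b a V q p'} : V ≠ ∅ → M.Δl p b q → M.Δv q V p' →
      TrA M (.mid p b) (some a) V (.mid p' a)
  | initN {p V f} : V ≠ ∅ → M.Δv p V f → TrA M (.init p) none V (.fin f)
  | midN {p b V q f} : V ≠ ∅ → M.Δl p b q → M.Δv q V f → TrA M (.mid p b) none V (.fin f)

/-- The translated annotated automaton. -/
def Tr (M : EVA Q A X) : AnnA (St Q A) (Option A) (Set (Marker X)) where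
  Δp := TrP M
  Δa := TrA M
  q0 := .init M.q0
  F := {s | ∃ f ∈ M.F, s = .fin f}

/-- `p` is a possible post-letter state reached from state `s`. -/
def Pre (M : EVA Q A X) : St Q A → Q → Prop
  | .init q, p => q = p
  | .mid q b, p => M.Δl q b p
  | .fin _, _ => False

/-- Annotation determined by a sequence of marker sets. -/
noncomputable def annListOf {X : Type} : ℕ → List (Set (Marker X)) → List (Set (Marker X) × ℕ)
  | _, [] => []
  | i, V :: Vs => if V = ∅ then annListOf (i+1) Vs else (V, i+1) :: annListOf (i+1) Vs

/-- The translated trace. -/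
noncomputable def mkTr : List A → List (Set (Marker X) × Q) →
    List (Option (Set (Marker X)) × St Q A)
  | [], [] => []
  | [], (V, p) :: _ => [(if V = ∅ then none else some V, St.fin p)]
  | _ :: _, [] => []
  | a :: d, (V, p) :: tr => (if V = ∅ then none else some V, St.mid p a) :: mkTr d tr

lemma finalState_cons {Q' Ω : Type} (p q : Q') (o : Option Ω) (tr) :
    finalState p ((o, q) :: tr) = finalState q tr :=
  List.getLastD_cons

lemma run_length {M : EVA Q A X} {p d tr pf} (h : M.Run p d tr pf) :
    tr.length = d.length + 1 := by
  induction h with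
  | last => rfl
  | cons _ _ _ ih => simp [ih]

lemma fwd {M : EVA Q A X} {p0 d tr pf} (h : M.Run p0 d tr pf) :
    ∀ s, Pre M s p0 → (Tr M).Run s (d.map some ++ [none]) (mkTr d tr) := by
  induction h with
  | @last p V p' hV =>
    intro s hs
    rcases hV with ⟨hV0, hp⟩ | ⟨hne, hδ⟩
    · subst hV0; subst hp
      simp only [mkTr, if_pos rfl, List.map_nil, List.nil_append]
      refine AnnA.Run.plain ?_ AnnA.Run.nil
      cases s with
      | init q => cases hs; exact TrP.initN
      | mid q b => exact TrP.midN hs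
      | fin q => exact hs.elim
    · simp only [mkTr, if_neg hne, List.map_nil, List.nil_append]
      refine AnnA.Run.ann ?_ AnnA.Run.nil
      cases s with
      | init q => cases hs; exact TrA.initN hne hδ
      | mid q b => exact TrA.midN hne hs hδ
      | fin q => exact hs.elim
  | @cons p V p' a q d tr pf hV hl hrun ih =>
    intro s hs
    have ih' := ih (St.mid p' a) hl
    rcases hV with ⟨hV0, hp⟩ | ⟨hne, hδ⟩
    · subst hV0; subst hp
      simp only [mkTr, if_pos rfl, List.map_cons, List.cons_append]
      refine AnnA.Run.plain ?_ ih'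
      cases s with
      | init q' => cases hs; exact TrP.initS
      | mid q' b => exact TrP.midS hs
      | fin q' => exact hs.elim
    · simp only [mkTr, if_neg hne, List.map_cons, List.cons_append]
      refine AnnA.Run.ann ?_ ih'
      cases s with
      | init q' => cases hs; exact TrA.initS hne hδ
      | mid q' b => exact TrA.midS hne hs hδ
      | fin q' => exact hs.elim

lemma final_mkTr {M : EVA Q A X} {p0 d tr pf} (h : M.Run p0 d tr pf) :
    ∀ s : St Q A, finalState s (mkTr d tr : List (Option (Set (Marker X)) × St Q A)) = .fin pf := by
  induction h with
  | @last p V p' hV =>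
    intro s
    simp only [mkTr]
    split <;> rfl
  | @cons p V p' a q d tr pf hV hl hrun ih =>
    intro s
    simp only [mkTr]
    split <;> rw [finalState_cons] <;> exact ih _

lemma annOf_mkTr {M : EVA Q A X} {p0 d tr pf} (h : M.Run p0 d tr pf) :
    ∀ i, annOf i (mkTr d tr : List (Option (Set (Marker X)) × St Q A))
      = annListOf i (tr.map Prod.fst) := by
  induction h with
  | @last p V p' hV =>
    intro i
    by_cases hV0 : V = ∅
    · simp [mkTr, annListOf, if_pos hV0, annOf, hV0]
    · simp [mkTr, annListOf, if_neg hV0, annOf, hV0]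
  | @cons p V p' a q d tr pf hV hl hrun ih =>
    intro i
    by_cases hV0 : V = ∅
    · simp [mkTr, annListOf, if_pos hV0, annOf, hV0, ih]
    · simp [mkTr, annListOf, if_neg hV0, annOf, hV0, ih]


lemma annA_run_nil_inv {Q' A' Ω : Type} {M : AnnA Q' A' Ω} {s : Q'} {tr} 
    (h : M.Run s [] tr) : tr = [] := by cases h; rfl

lemma bwd {M : EVA Q A X} {s : St Q A} {d' : List (Option A)} {tr'}
    (h : (Tr M).Run s d' tr') :
    (∀ f, s ≠ .fin f) → (∃ f, finalState s tr' = St.fin f) →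
    ∃ d tr pf p0, Pre M s p0 ∧ M.Run p0 d tr pf ∧
      d' = d.map some ++ [none] ∧ tr' = mkTr d tr ∧
      finalState s tr' = St.fin pf := by
  induction h with
  | @nil p =>
    intro hnf hfin
    obtain ⟨f, hf⟩ := hfin
    exact absurd hf (hnf f)
  | @plain s ℓ t d₀ tr₀ hδ hrun ih =>
    intro hnf hfin
    rw [finalState_cons] at hfin
    cases hδ with
    | @initS p a =>
      obtain ⟨d, tr, pf, p0, hpre, hrun', hd, htr, hfin'⟩ :=
        ih (by intro f h; cases h) hfin
      refine ⟨a :: d, (∅, p) :: tr, pf, p, rfl,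
        EVA.Run.cons (Or.inl ⟨rfl, rfl⟩) hpre hrun', by simp [hd], ?_, ?_⟩
      · simp [mkTr, htr]
      · rw [finalState_cons]; exact hfin'
    | @midS p b a q hl =>
      obtain ⟨d, tr, pf, p0, hpre, hrun', hd, htr, hfin'⟩ :=
        ih (by intro f h; cases h) hfin
      refine ⟨a :: d, (∅, q) :: tr, pf, q, hl,
        EVA.Run.cons (Or.inl ⟨rfl, rfl⟩) hpre hrun', by simp [hd], ?_, ?_⟩
      · simp [mkTr, htr]
      · rw [finalState_cons]; exact hfin'
    | @initN p =>
      have hd0 : d₀ = [] := by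
        cases hrun with
        | nil => rfl
        | plain hδ _ => cases hδ
        | ann hδ _ => cases hδ
      subst hd0
      have htr0 : tr₀ = [] := annA_run_nil_inv hrun
      subst htr0
      refine ⟨[], [(∅, p)], p, p, rfl, EVA.Run.last (Or.inl ⟨rfl, rfl⟩), rfl, ?_, rfl⟩
      simp [mkTr]
    | @midN p b f hl =>
      have hd0 : d₀ = [] := by
        cases hrun with
        | nil => rfl
        | plain hδ _ => cases hδ
        | ann hδ _ => cases hδ
      subst hd0
      have htr0 : tr₀ = [] := annA_run_nil_inv hrun
      subst htr0
      refine ⟨[], [(∅, f)], f, f, hl, EVA.Run.last (Or.inl ⟨rfl, rfl⟩), rfl, ?_, rfl⟩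
      simp [mkTr]
  | @ann s ℓ V t d₀ tr₀ hδ hrun ih =>
    intro hnf hfin
    rw [finalState_cons] at hfin
    cases hδ with
    | @initS p a V p' hne hδv =>
      obtain ⟨d, tr, pf, p0, hpre, hrun', hd, htr, hfin'⟩ :=
        ih (by intro f h; cases h) hfin
      refine ⟨a :: d, (V, p') :: tr, pf, p, rfl,
        EVA.Run.cons (Or.inr ⟨hne, hδv⟩) hpre hrun', by simp [hd], ?_, ?_⟩
      · simp [mkTr, htr, if_neg hne]
      · rw [finalState_cons]; exact hfin'
    | @midS p b a V q p' hne hl hδv =>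
      obtain ⟨d, tr, pf, p0, hpre, hrun', hd, htr, hfin'⟩ :=
        ih (by intro f h; cases h) hfin
      refine ⟨a :: d, (V, p') :: tr, pf, q, hl,
        EVA.Run.cons (Or.inr ⟨hne, hδv⟩) hpre hrun', by simp [hd], ?_, ?_⟩
      · simp [mkTr, htr, if_neg hne]
      · rw [finalState_cons]; exact hfin'
    | @initN p V f hne hδv =>
      have hd0 : d₀ = [] := by
        cases hrun with
        | nil => rfl
        | plain hδ _ => cases hδ
        | ann hδ _ => cases hδ
      subst hd0
      have htr0 : tr₀ = [] := annA_run_nil_inv hrun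
      subst htr0
      refine ⟨[], [(V, f)], f, p, rfl, EVA.Run.last (Or.inr ⟨hne, hδv⟩), rfl, ?_, rfl⟩
      simp [mkTr, if_neg hne]
    | @midN p b V q f hne hl hδv =>
      have hd0 : d₀ = [] := by
        cases hrun with
        | nil => rfl
        | plain hδ _ => cases hδ
        | ann hδ _ => cases hδ
      subst hd0
      have htr0 : tr₀ = [] := annA_run_nil_inv hrun
      subst htr0
      refine ⟨[], [(V, f)], f, q, hl, EVA.Run.last (Or.inr ⟨hne, hδv⟩), rfl, ?_, rfl⟩
      simp [mkTr, if_neg hne]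

lemma annListOf_lt : ∀ (Vs : List (Set (Marker X))) (i : ℕ) (o : Set (Marker X)) (k : ℕ),
    (o, k) ∈ annListOf i Vs → i < k := by
  intro Vs
  induction Vs with
  | nil => intro i o k h; simp [annListOf] at h
  | cons V Vs ih =>
    intro i o k h
    simp only [annListOf] at h
    split at h
    · exact Nat.lt_of_succ_lt (ih (i+1) o k h)
    · rcases List.mem_cons.1 h with h | h
      · cases h; omega
      · exact Nat.lt_of_succ_lt (ih (i+1) o k h)

lemma annListOf_inj : ∀ (Vs Vs' : List (Set (Marker X))) (i : ℕ),
    Vs.length = Vs'.length → annListOf i Vs = annListOf i Vs' → Vs = Vs' := by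
  intro Vs
  induction Vs with
  | nil =>
    intro Vs' i hl _
    cases Vs' with
    | nil => rfl
    | cons => simp at hl
  | cons V Vs ih =>
    intro Vs' i hl heq
    cases Vs' with
    | nil => simp at hl
    | cons V' Vs'' =>
      simp only [List.length_cons, Nat.add_right_cancel_iff] at hl
      simp only [annListOf] at heq
      by_cases h1 : V = ∅ <;> by_cases h2 : V' = ∅
      · rw [if_pos h1, if_pos h2] at heq
        rw [h1, h2, ih Vs'' (i+1) hl heq]
      · rw [if_pos h1, if_neg h2] at heq
        exfalso
        have : (V', i+1) ∈ annListOf (i+1) Vs := by rw [heq]; exact List.mem_cons_self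
        have := annListOf_lt Vs (i+1) V' (i+1) this
        omega
      · rw [if_neg h1, if_pos h2] at heq
        exfalso
        have : (V, i+1) ∈ annListOf (i+1) Vs'' := by rw [← heq]; exact List.mem_cons_self
        have := annListOf_lt Vs'' (i+1) V (i+1) this
        omega
      · rw [if_neg h1, if_neg h2] at heq
        obtain ⟨h3, h4⟩ := List.cons.injEq .. ▸ heq
        obtain ⟨h5, -⟩ := Prod.mk.injEq .. ▸ h3
        rw [h5, ih Vs'' (i+1) hl h4]

/-- The mapping determined by a sequence of marker sets. -/
noncomputable def muOf (Vs : List (Set (Marker X))) : X → Option (ℕ × ℕ) :=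
  fun x =>
    if h : ∃ p : ℕ × ℕ, 1 ≤ p.1 ∧ p.1 ≤ Vs.length ∧ 1 ≤ p.2 ∧ p.2 ≤ Vs.length ∧
        (true, x) ∈ Vs.getD (p.1 - 1) ∅ ∧ (false, x) ∈ Vs.getD (p.2 - 1) ∅
    then some h.choose else none

lemma mapOf_muOf {Vs : List (Set (Marker X))} (hv : ValidVs Vs) :
    MapOf Vs (muOf Vs) := by
  obtain ⟨h1, h2, h3⟩ := hv
  intro x i j
  constructor
  · intro h
    unfold muOf at h
    split at h
    · rename_i hex
      have hspec := hex.choose_spec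
      have : hex.choose = (i, j) := by injection h
      rw [this] at hspec
      exact hspec
    · exact absurd h (by simp)
  · intro hc
    have hex : ∃ p : ℕ × ℕ, 1 ≤ p.1 ∧ p.1 ≤ Vs.length ∧ 1 ≤ p.2 ∧ p.2 ≤ Vs.length ∧
        (true, x) ∈ Vs.getD (p.1 - 1) ∅ ∧ (false, x) ∈ Vs.getD (p.2 - 1) ∅ :=
      ⟨(i, j), hc⟩
    unfold muOf
    rw [dif_pos hex]
    have hspec := hex.choose_spec
    obtain ⟨a1, a2, a3, a4, a5, a6⟩ := hspec
    obtain ⟨b1, b2, b3, b4, b5, b6⟩ := hc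
    have e1 : hex.choose.1 - 1 = i - 1 :=
      h1 (true, x) _ _ (by omega) (by omega) a5 b5
    have e2 : hex.choose.2 - 1 = j - 1 :=
      h1 (false, x) _ _ (by omega) (by omega) a6 b6
    have : hex.choose = (i, j) := by
      have := Prod.mk.eta (p := hex.choose)
      rw [← this]
      congr 1 <;> omega
    rw [this]

lemma mapOf_unique {Vs : List (Set (Marker X))} {μ μ' : X → Option (ℕ × ℕ)}
    (h : MapOf Vs μ) (h' : MapOf Vs μ') : μ = μ' := by
  funext x
  cases hx : μ x with
  | none =>
    cases hx' : μ' x with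
    | none => rfl
    | some p =>
      exfalso
      obtain ⟨i, j⟩ := p
      have := (h x i j).2 ((h' x i j).1 hx')
      rw [hx] at this
      cases this
  | some p =>
    obtain ⟨i, j⟩ := p
    exact ((h' x i j).2 ((h x i j).1 hx)).symm

lemma vs_subset {Vs Vs' : List (Set (Marker X))} {μ : X → Option (ℕ × ℕ)}
    (hv : ValidVs Vs) (hm : MapOf Vs μ) (hm' : MapOf Vs' μ)
    (hl : Vs.length = Vs'.length) {k : ℕ} (hk : k < Vs.length) :
    Vs.getD k ∅ ⊆ Vs'.getD k ∅ := by
  obtain ⟨h1, h2, h3⟩ := hv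
  rintro ⟨b, x⟩ hb
  cases b
  · -- (false, x)
    obtain ⟨i, hi, hmem⟩ := (h2 x).2 ⟨k, hk, hb⟩
    have hμ : μ x = some (i + 1, k + 1) := (hm x (i+1) (k+1)).2
      ⟨by omega, by omega, by omega, by omega, by simpa using hmem, by simpa using hb⟩
    have := (hm' x (i+1) (k+1)).1 hμ
    simpa using this.2.2.2.2.2
  · -- (true, x)
    obtain ⟨j, hj, hmem⟩ := (h2 x).1 ⟨k, hk, hb⟩
    have hμ : μ x = some (k + 1, j + 1) := (hm x (k+1) (j+1)).2
      ⟨by omega, by omega, by omega, by omega, by simpa using hb, by simpa using hmem⟩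
    have := (hm' x (k+1) (j+1)).1 hμ
    simpa using this.2.2.2.2.1

lemma vs_unique {Vs Vs' : List (Set (Marker X))} {μ : X → Option (ℕ × ℕ)}
    (hv : ValidVs Vs) (hv' : ValidVs Vs') (hm : MapOf Vs μ) (hm' : MapOf Vs' μ)
    (hl : Vs.length = Vs'.length) : Vs = Vs' := by
  apply List.ext_getElem hl
  intro k hk hk'
  have e1 : Vs.getD k ∅ = Vs[k] := List.getD_eq_getElem Vs ∅ hk
  have e2 : Vs'.getD k ∅ = Vs'[k] := List.getD_eq_getElem Vs' ∅ hk'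
  rw [← e1, ← e2]
  exact Set.Subset.antisymm (vs_subset ⟨hv.1, hv.2.1, hv.2.2⟩ hm hm' hl hk)
    (vs_subset ⟨hv'.1, hv'.2.1, hv'.2.2⟩ hm' hm hl.symm hk')

lemma equiv_of_rel {α β : Type*} {s : Set α} {t : Set β} (R : α → β → Prop)
    (h1 : ∀ a ∈ s, ∃ b ∈ t, R a b)
    (h2 : ∀ b ∈ t, ∃ a ∈ s, R a b)
    (h3 : ∀ a b b', R a b → R a b' → b = b')
    (h4 : ∀ a a' b, R a b → R a' b → a = a') :
    Nonempty ((s : Set α) ≃ (t : Set β)) := by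
  choose f hf hRf using h1
  choose g hg hRg using h2
  exact ⟨{
    toFun := fun a => ⟨f a a.2, hf a a.2⟩
    invFun := fun b => ⟨g b b.2, hg b b.2⟩
    left_inv := fun a => Subtype.ext (h4 _ _ _ (hRg _ (hf a a.2)) (hRf a a.2))
    right_inv := fun b => Subtype.ext (h3 _ _ _ (hRf _ (hg b b.2)) (hRg b b.2)) }⟩

end Aux

/-- Every sequential extended variable-set automaton over alphabet `A` and
variables `X` translates into an annotated automaton over the alphabet
`A ∪ {#}` (here `Option A`, with `# = none`) and output alphabet
`2^{markers}` such that for every document `d`, the mappings in `⟦M⟧(d)` are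
in bijection with the annotations in `⟦M'⟧(d#)`; moreover, if `M` is
unambiguous then so is `M'`. -/
theorem eva_to_anna {Q A X : Type} (M : EVA Q A X) (hseq : M.Sequential) :
    ∃ (Q' : Type) (M' : AnnA Q' (Option A) (Set (Marker X))),
      (∀ d : List A,
        Nonempty ((M.sem d : Set (X → Option (ℕ × ℕ))) ≃
          (M'.sem (d.map some ++ [none]) : Set (List (Set (Marker X) × ℕ))))) ∧
      (M.Unambiguous → M'.Unambiguous) := by
  refine ⟨St Q A, Tr M, ?_, ?_⟩
  · intro d
    apply equiv_of_rel (R := fun μ ν => ∃ Vs : List (Set (Marker X)),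
      Vs.length = d.length + 1 ∧ ValidVs Vs ∧ MapOf Vs μ ∧ ν = annListOf 0 Vs)
    · rintro μ ⟨tr, pf, hrun, hpf, hval, hmap⟩
      refine ⟨annListOf 0 (tr.map Prod.fst), ?_, tr.map Prod.fst, ?_, hval, hmap, rfl⟩
      · refine ⟨mkTr d tr, fwd hrun (.init M.q0) rfl, ?_, annOf_mkTr hrun 0⟩
        rw [show finalState (Tr M).q0 (mkTr d tr) = St.fin pf from final_mkTr hrun _]
        exact ⟨pf, hpf, rfl⟩
      · simp [run_length hrun]
    · rintro ν ⟨tr', hrun', hacc, hann⟩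
      obtain ⟨f, hfF, hfeq⟩ := hacc
      obtain ⟨d₀, tr, pf, p0, hpre, hrun, hd, htr, hfin⟩ :=
        bwd hrun' (by intro g h; cases h) ⟨f, hfeq⟩
      have hq : M.q0 = p0 := hpre
      rw [← hq] at hrun
      have hmaps : d.map some = d₀.map some := by
        have := hd
        have hlen : (d.map some).length = (d₀.map some).length := by
          have := congrArg List.length hd
          simpa using this
        exact List.append_inj_left hd hlen
      have hdd : d = d₀ := List.map_injective_iff.2 (Option.some_injective A) hmaps
      subst hdd
      have hpfF : pf ∈ M.F := by
        have : St.fin f = St.fin pf := hfeq ▸ hfin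
        have : f = pf := by injection this
        exact this ▸ hfF
      have hval : ValidVs (tr.map Prod.fst) := hseq d tr pf hrun hpfF
      refine ⟨muOf (tr.map Prod.fst), ⟨tr, pf, hrun, hpfF, hval, mapOf_muOf hval⟩,
        tr.map Prod.fst, by simp [run_length hrun], hval, mapOf_muOf hval, ?_⟩
      rw [← hann, htr, annOf_mkTr hrun 0]
    · rintro μ ν ν' ⟨Vs, hl, hv, hm, rfl⟩ ⟨Vs', hl', hv', hm', rfl⟩
      rw [vs_unique hv hv' hm hm' (hl.trans hl'.symm)]
    · rintro μ μ' ν ⟨Vs, hl, hv, hm, rfl⟩ ⟨Vs', hl', hv', hm', heq⟩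
      have hvv : Vs = Vs' := annListOf_inj Vs Vs' 0 (hl.trans hl'.symm) heq
      subst hvv
      exact mapOf_unique hm hm'
  · intro hun
    intro d' ν tr1' tr2' hr1 hacc1 ha1 hr2 hacc2 ha2
    obtain ⟨f1, hf1F, he1⟩ := hacc1
    obtain ⟨f2, hf2F, he2⟩ := hacc2
    obtain ⟨d1, tr1, pf1, p1, hpre1, hrun1, hd1, htr1, hfin1⟩ :=
      bwd hr1 (by intro g h; cases h) ⟨f1, he1⟩
    obtain ⟨d2, tr2, pf2, p2, hpre2, hrun2, hd2, htr2, hfin2⟩ :=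
      bwd hr2 (by intro g h; cases h) ⟨f2, he2⟩
    have hq1 : M.q0 = p1 := hpre1
    have hq2 : M.q0 = p2 := hpre2
    rw [← hq1] at hrun1
    rw [← hq2] at hrun2
    have hdd : d1 = d2 := by
      have hd12 : d1.map some ++ [none] = d2.map some ++ [none] := hd1 ▸ hd2
      have hlen : (d1.map some).length = (d2.map some).length := by
        have := congrArg List.length hd12
        simp at this; simp [this]
      exact List.map_injective_iff.2 (Option.some_injective A)
        (List.append_inj_left hd12 hlen)
    subst hdd
    have hpf1F : pf1 ∈ M.F := by
      have : St.fin f1 = St.fin pf1 := he1 ▸ hfin1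
      have : f1 = pf1 := by injection this
      exact this ▸ hf1F
    have hpf2F : pf2 ∈ M.F := by
      have : St.fin f2 = St.fin pf2 := he2 ▸ hfin2
      have : f2 = pf2 := by injection this
      exact this ▸ hf2F
    have hval1 : ValidVs (tr1.map Prod.fst) := hseq d1 tr1 pf1 hrun1 hpf1F
    have hval2 : ValidVs (tr2.map Prod.fst) := hseq d1 tr2 pf2 hrun2 hpf2F
    have hvv : tr1.map Prod.fst = tr2.map Prod.fst := by
      apply annListOf_inj _ _ 0
      · simp [run_length hrun1, run_length hrun2]
      · rw [← annOf_mkTr hrun1 0, ← annOf_mkTr hrun2 0, ← htr1, ← htr2, ha1, ha2]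
    have htreq : tr1 = tr2 := by
      apply hun d1 (muOf (tr1.map Prod.fst)) tr1 pf1 tr2 pf2 hrun1 hpf1F
        (mapOf_muOf hval1) hrun2 hpf2F ?_
      rw [← hvv]
      exact mapOf_muOf hval1
    rw [htr1, htr2, htreq]
end
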